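/- The group Υ is generated by the matrices n(z,x) together with their transposes n(z,x)ᵀ, as z ranges over ℤ[ζ] and x over the integers with x ≡ N(z) mod 2. -/

import Mathlib

open Matrix Complex
open scoped ComplexOrder

noncomputable section

/-- `SLC n` is the special linear group of `n × n` complex matrices. -/
abbrev SLC (n : ℕ) := Matrix.SpecialLinearGroup (Fin n) ℂ

/-- The standard Hermitian matrix of signature `(d,1)` used to define `SU(d,1)`:
`J_{1,d+1} = J_{d+1,1} = 1`, `J_{i,i} = 1` for `2 ≤ i ≤ d` (1-indexed), and `0` otherwise. -/
def Jmat (d : ℕ) : Matrix (Fin (d+1)) (Fin (d+1)) ℂ :=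
  Matrix.of fun i j =>
    if (i = 0 ∧ j = Fin.last d) ∨ (i = Fin.last d ∧ j = 0) then 1
    else if i = j ∧ i ≠ 0 ∧ i ≠ Fin.last d then 1 else 0

/-- `SU(d,1)`, realised as the subgroup of `SL_{d+1}(ℂ)` preserving the Hermitian
form given by `Jmat d`. -/
def SUd1 (d : ℕ) : Subgroup (SLC (d+1)) where
  carrier := {g | (↑g : Matrix (Fin (d+1)) (Fin (d+1)) ℂ)ᴴ * Jmat d * ↑g = Jmat d}
  one_mem' := by simp
  mul_mem' := by
    intro a b ha hb
    simp only [Set.mem_setOf_eq] at ha hb ⊢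
    rw [Matrix.SpecialLinearGroup.coe_mul, Matrix.conjTranspose_mul]
    calc (↑b)ᴴ * (↑a)ᴴ * Jmat d * ((↑a : Matrix (Fin (d+1)) (Fin (d+1)) ℂ) * ↑b)
        = (↑b)ᴴ * ((↑a : Matrix (Fin (d+1)) (Fin (d+1)) ℂ)ᴴ * Jmat d * ↑a) * ↑b := by
          simp only [Matrix.mul_assoc]
      _ = Jmat d := by rw [ha]; exact hb
  inv_mem' := by
    intro a ha
    simp only [Set.mem_setOf_eq] at ha ⊢
    set A : Matrix (Fin (d+1)) (Fin (d+1)) ℂ := ↑a with hA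
    set B : Matrix (Fin (d+1)) (Fin (d+1)) ℂ := ↑(a⁻¹) with hB
    have h1 : A * B = 1 := by
      rw [hA, hB, ← Matrix.SpecialLinearGroup.coe_mul, mul_inv_cancel]
      simp
    calc Bᴴ * Jmat d * B
        = Bᴴ * (Aᴴ * Jmat d * A) * B := by rw [ha]
      _ = (A * B)ᴴ * Jmat d * (A * B) := by
          rw [Matrix.conjTranspose_mul]; simp only [Matrix.mul_assoc]
      _ = Jmat d := by rw [h1]; simp

/-- The Hermitian form `⟨v,w⟩ = conj(v)ᵀ J w` on `ℂ^{d+1}`. -/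
def Hform (d : ℕ) (v w : Fin (d+1) → ℂ) : ℂ := star v ⬝ᵥ (Jmat d *ᵥ w)

/-- The symmetric space `ℋ = {τ ∈ ℂ^d : ⟨(τ;1),(τ;1)⟩ < 0}`. -/
def Hdom (d : ℕ) : Set (Fin d → ℂ) :=
  {τ | Hform d (Fin.snoc τ 1) (Fin.snoc τ 1) < 0}

/-- The automorphy factor `j(g,τ) = Cτ + D`. -/
def jfun (d : ℕ) (g : Matrix (Fin (d+1)) (Fin (d+1)) ℂ) (τ : Fin d → ℂ) : ℂ :=
  (g *ᵥ Fin.snoc τ 1) (Fin.last d)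

/-- The action `g*τ = (Cτ+D)⁻¹ (Aτ+B)` of `SU(d,1)` on `ℋ`. -/
def actH (d : ℕ) (g : Matrix (Fin (d+1)) (Fin (d+1)) ℂ) (τ : Fin d → ℂ) : Fin d → ℂ :=
  fun k => (g *ᵥ Fin.snoc τ 1) (Fin.castSucc k) / jfun d g τ

open scoped Classical in
/-- `X(g) = -g_{d+1,1}` if `g_{d+1,1} ≠ 0`, and `g_{d+1,d+1}` otherwise. -/
def Xfun (d : ℕ) (g : Matrix (Fin (d+1)) (Fin (d+1)) ℂ) : ℂ :=
  if g (Fin.last d) 0 = 0 then g (Fin.last d) (Fin.last d) else -(g (Fin.last d) 0)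

/-- The branch `j̃(g,τ) = Log(j(g,τ)/X(g)) + Log(X(g))` of the logarithm of `j(g,τ)`,
where `Log` is the principal branch (imaginary part in `(-π, π]`). -/
def jtilde (d : ℕ) (g : Matrix (Fin (d+1)) (Fin (d+1)) ℂ) (τ : Fin d → ℂ) : ℂ :=
  Complex.log (jfun d g τ / Xfun d g) + Complex.log (Xfun d g)

/-- A base point of `ℋ` (for `d ≥ 1`). -/
def baseTau (d : ℕ) : Fin d → ℂ := fun i => if (i : ℕ) = 0 then -1 else 0

/-- The 2-cocycle `σ(g,h) = (1/(2πi))(j̃(gh,τ) − j̃(g,h*τ) − j̃(h,τ))`, evaluated at the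
base point of `ℋ` (as proved in the paper, the value is an integer and does not depend
on the choice of `τ ∈ ℋ`). -/
def sigmaC (d : ℕ) (g h : Matrix (Fin (d+1)) (Fin (d+1)) ℂ) : ℂ :=
  (jtilde d (g * h) (baseTau d) - jtilde d g (actH d h (baseTau d)) - jtilde d h (baseTau d)) /
    (2 * Real.pi * Complex.I)

/-- The integer-valued 2-cocycle `σ` on `SU(d,1)` classifying its universal cover. -/
def sigmaZ (d : ℕ) (g h : Matrix (Fin (d+1)) (Fin (d+1)) ℂ) : ℤ := round (sigmaC d g h).re

/-- The primitive cube root of unity `ζ = e^{2πi/3}`. -/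
def zeta3 : ℂ := Complex.exp (2 * Real.pi * Complex.I / 3)

lemma zeta3_pow_three : zeta3 ^ 3 = 1 := by
  rw [zeta3, ← Complex.exp_nat_mul]
  rw [show (3 : ℕ) * (2 * ↑Real.pi * Complex.I / 3) = 2 * ↑Real.pi * Complex.I by
    push_cast; ring]
  exact Complex.exp_two_pi_mul_I

lemma zeta3_ne_one : zeta3 ≠ 1 := by
  have him : zeta3.im = Real.sin (2 * Real.pi / 3) := by
    rw [zeta3, show 2 * (Real.pi : ℂ) * Complex.I / 3 = (2 * Real.pi / 3 : ℝ) * Complex.I by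
      push_cast; ring]
    rw [Complex.exp_ofReal_mul_I_im]
  have hpos : 0 < Real.sin (2 * Real.pi / 3) := by
    apply Real.sin_pos_of_pos_of_lt_pi
    · positivity
    · nlinarith [Real.pi_pos]
  intro h
  rw [h] at him
  simp only [Complex.one_im] at him
  linarith

lemma zeta3_quad : zeta3 ^ 2 + zeta3 + 1 = 0 := by
  have h : (zeta3 - 1) * (zeta3 ^ 2 + zeta3 + 1) = 0 := by
    have : (zeta3 - 1) * (zeta3 ^ 2 + zeta3 + 1) = zeta3 ^ 3 - 1 := by ring
    rw [this, zeta3_pow_three, sub_self]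
  rcases mul_eq_zero.mp h with h1 | h2
  · exact absurd (sub_eq_zero.mp h1) zeta3_ne_one
  · exact h2

lemma zeta3_conj : starRingEnd ℂ zeta3 = zeta3 ^ 2 := by
  have habs : ‖zeta3‖ = 1 := by
    rw [zeta3, show 2 * (Real.pi : ℂ) * Complex.I / 3 = (2 * Real.pi / 3 : ℝ) * Complex.I by
      push_cast; ring]
    exact Complex.norm_exp_ofReal_mul_I _
  have h1 : starRingEnd ℂ zeta3 * zeta3 = 1 := by
    rw [mul_comm, Complex.mul_conj, Complex.normSq_eq_norm_sq, habs]; norm_num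
  have h2 : zeta3 ^ 2 * zeta3 = 1 := by
    rw [← pow_succ, zeta3_pow_three]
  have hz : zeta3 ≠ 0 := by
    intro h
    rw [h] at habs; simp at habs
  exact mul_right_cancel₀ hz (h1.trans h2.symm)

/-- The ring of Eisenstein integers `ℤ[ζ]`, as a subring of `ℂ`. -/
def Eis : Subring ℂ := Subring.closure {zeta3}

lemma zeta3_mem_Eis : zeta3 ∈ Eis := Subring.subset_closure rfl

lemma Eis_conj_mem {x : ℂ} (hx : x ∈ Eis) : starRingEnd ℂ x ∈ Eis := by
  induction hx using Subring.closure_induction with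
  | mem y hy =>
      rcases hy with rfl
      rw [zeta3_conj]
      exact pow_mem zeta3_mem_Eis 2
  | zero => simpa using Eis.zero_mem
  | one => simpa using Eis.one_mem
  | add a b _ _ ha hb => rw [map_add]; exact Eis.add_mem ha hb
  | neg a _ ha => rw [map_neg]; exact Eis.neg_mem ha
  | mul a b _ _ ha hb => rw [_root_.map_mul]; exact Eis.mul_mem ha hb

/-- The square root `√-3 = 2ζ + 1` of `-3` in `ℤ[ζ]`. -/
def sqrt3 : ℂ := 2 * zeta3 + 1

lemma sqrt3_mem_Eis : sqrt3 ∈ Eis := by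
  refine Eis.add_mem (Eis.mul_mem ?_ zeta3_mem_Eis) Eis.one_mem
  rw [show (2 : ℂ) = 1 + 1 by norm_num]
  exact Eis.add_mem Eis.one_mem Eis.one_mem

lemma sqrt3_sq : sqrt3 * sqrt3 = -3 := by
  have h := zeta3_quad
  rw [sqrt3]; ring_nf; linear_combination 4 * h
/-- The set of multiples of `c` by Eisenstein integers (e.g. the ideal `√-3·ℤ[ζ]` of `ℤ[ζ]`,
viewed inside `ℂ`). -/
def mulSet (c : ℂ) : Set ℂ := {x | ∃ y ∈ Eis, x = c * y}

lemma mulSet_zero (c : ℂ) : (0 : ℂ) ∈ mulSet c := ⟨0, Eis.zero_mem, by ring⟩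

lemma mulSet_add {c x y : ℂ} (hx : x ∈ mulSet c) (hy : y ∈ mulSet c) :
    x + y ∈ mulSet c := by
  obtain ⟨a, ha, rfl⟩ := hx; obtain ⟨b, hb, rfl⟩ := hy
  exact ⟨a + b, Eis.add_mem ha hb, by ring⟩

lemma mulSet_neg {c x : ℂ} (hx : x ∈ mulSet c) : -x ∈ mulSet c := by
  obtain ⟨a, ha, rfl⟩ := hx
  exact ⟨-a, Eis.neg_mem ha, by ring⟩

lemma mulSet_mul_left {c x y : ℂ} (hx : x ∈ Eis) (hy : y ∈ mulSet c) :
    x * y ∈ mulSet c := by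
  obtain ⟨a, ha, rfl⟩ := hy
  exact ⟨x * a, Eis.mul_mem hx ha, by ring⟩

lemma mulSet_mul_right {c x y : ℂ} (hx : x ∈ mulSet c) (hy : y ∈ Eis) :
    x * y ∈ mulSet c := by
  obtain ⟨a, ha, rfl⟩ := hx
  exact ⟨a * y, Eis.mul_mem ha hy, by ring⟩

lemma sqrt3_mul_sqrt3 {x y : ℂ} (hx : x ∈ mulSet sqrt3) (hy : y ∈ mulSet sqrt3) :
    x * y ∈ mulSet 3 := by
  obtain ⟨a, ha, rfl⟩ := hx; obtain ⟨b, hb, rfl⟩ := hy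
  refine ⟨-(a * b), Eis.neg_mem (Eis.mul_mem ha hb), ?_⟩
  have h := sqrt3_sq
  linear_combination a * b * h

lemma three_subset_sqrt3 {x : ℂ} (hx : x ∈ mulSet 3) : x ∈ mulSet sqrt3 := by
  obtain ⟨a, ha, rfl⟩ := hx
  refine ⟨-(sqrt3 * a), Eis.neg_mem (Eis.mul_mem sqrt3_mem_Eis ha), ?_⟩
  have h := sqrt3_sq
  linear_combination a * h

lemma Jmat2_entries_mem : ∀ i j, Jmat 2 i j ∈ Eis := by
  intro i j
  rw [Jmat]
  dsimp only [Matrix.of_apply]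
  split_ifs <;> first | exact Eis.one_mem | exact Eis.zero_mem

lemma entries_mul_mem {A B : Matrix (Fin 3) (Fin 3) ℂ}
    (hA : ∀ i j, A i j ∈ Eis) (hB : ∀ i j, B i j ∈ Eis) :
    ∀ i j, (A * B) i j ∈ Eis := by
  intro i j
  rw [Matrix.mul_apply]
  exact Subring.sum_mem _ fun k _ => Eis.mul_mem (hA i k) (hB k j)

lemma Jmat2_mul_self : Jmat 2 * Jmat 2 = 1 := by
  ext i j
  rw [Matrix.mul_apply, Fin.sum_univ_three]
  fin_cases i <;> fin_cases j <;>
    simp [Jmat, Matrix.one_apply, Fin.last]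

/-- The group `Γ = {g ∈ SL₃(ℤ[ζ]) : conj(g)ᵀ J g = J}`, a subgroup of `SU(2,1)`. -/
def GammaEis : Subgroup (SLC 3) where
  carrier := {g | (∀ i j, (↑g : Matrix (Fin 3) (Fin 3) ℂ) i j ∈ Eis) ∧
    (↑g : Matrix (Fin 3) (Fin 3) ℂ)ᴴ * Jmat 2 * ↑g = Jmat 2}
  one_mem' := by
    constructor
    · intro i j
      rw [Matrix.SpecialLinearGroup.coe_one, Matrix.one_apply]
      split_ifs <;> first | exact Eis.one_mem | exact Eis.zero_mem
    · simp
  mul_mem' := by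
    intro a b ha hb
    obtain ⟨ha1, ha2⟩ := ha; obtain ⟨hb1, hb2⟩ := hb
    constructor
    · intro i j
      rw [Matrix.SpecialLinearGroup.coe_mul]
      exact entries_mul_mem ha1 hb1 i j
    · rw [Matrix.SpecialLinearGroup.coe_mul, Matrix.conjTranspose_mul]
      calc (↑b)ᴴ * (↑a)ᴴ * Jmat 2 * ((↑a : Matrix (Fin 3) (Fin 3) ℂ) * ↑b)
          = (↑b)ᴴ * ((↑a : Matrix (Fin 3) (Fin 3) ℂ)ᴴ * Jmat 2 * ↑a) * ↑b := by
            simp only [Matrix.mul_assoc]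
        _ = Jmat 2 := by rw [ha2]; exact hb2
  inv_mem' := by
    intro a ha
    obtain ⟨ha1, ha2⟩ := ha
    set A : Matrix (Fin 3) (Fin 3) ℂ := ↑a with hA
    set B : Matrix (Fin 3) (Fin 3) ℂ := ↑(a⁻¹) with hB
    have hAB : A * B = 1 := by
      rw [hA, hB, ← Matrix.SpecialLinearGroup.coe_mul, mul_inv_cancel]; simp
    have hJJ := Jmat2_mul_self
    have hform : B = Jmat 2 * Aᴴ * Jmat 2 := by
      have h1 : (Jmat 2 * Aᴴ * Jmat 2) * A = 1 := by
        calc (Jmat 2 * Aᴴ * Jmat 2) * A = Jmat 2 * (Aᴴ * Jmat 2 * A) := by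
              simp only [Matrix.mul_assoc]
          _ = Jmat 2 * Jmat 2 := by rw [ha2]
          _ = 1 := hJJ
      calc B = 1 * B := (Matrix.one_mul _).symm
        _ = ((Jmat 2 * Aᴴ * Jmat 2) * A) * B := by rw [h1]
        _ = (Jmat 2 * Aᴴ * Jmat 2) * (A * B) := by simp only [Matrix.mul_assoc]
        _ = Jmat 2 * Aᴴ * Jmat 2 := by rw [hAB, Matrix.mul_one]
    have hAH : ∀ i j, Aᴴ i j ∈ Eis := by
      intro i j
      rw [Matrix.conjTranspose_apply]
      exact Eis_conj_mem (ha1 j i)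
    have hBent : ∀ i j, B i j ∈ Eis := by
      rw [hform]
      exact entries_mul_mem (entries_mul_mem Jmat2_entries_mem hAH) Jmat2_entries_mem
    constructor
    · exact hBent
    · calc Bᴴ * Jmat 2 * B
          = Bᴴ * (Aᴴ * Jmat 2 * A) * B := by rw [ha2]
        _ = (A * B)ᴴ * Jmat 2 * (A * B) := by
            rw [Matrix.conjTranspose_mul]; simp only [Matrix.mul_assoc]
        _ = Jmat 2 := by rw [hAB]; simp
/-- The principal congruence subgroup `Γ(√-3)` of level `√-3` in `GammaEis`. -/
def GammaS3 : Subgroup (SLC 3) where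
  carrier := {g | g ∈ GammaEis ∧
    ∀ i j, ((↑g : Matrix (Fin 3) (Fin 3) ℂ) i j - (1 : Matrix (Fin 3) (Fin 3) ℂ) i j)
      ∈ mulSet sqrt3}
  one_mem' := ⟨GammaEis.one_mem, by intro i j; simp [mulSet_zero]⟩
  mul_mem' := by
    intro a b ha hb
    refine ⟨GammaEis.mul_mem ha.1 hb.1, ?_⟩
    intro i j
    set A : Matrix (Fin 3) (Fin 3) ℂ := ↑a with hA
    set B : Matrix (Fin 3) (Fin 3) ℂ := ↑b with hB
    have key : A * B - 1 = (A - 1) * (B - 1) + (A - 1) + (B - 1) := by noncomm_ring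
    have : ((↑(a * b) : Matrix (Fin 3) (Fin 3) ℂ) i j - (1 : Matrix (Fin 3) (Fin 3) ℂ) i j)
        = ((A - 1) * (B - 1)) i j + (A - 1) i j + (B - 1) i j := by
      rw [Matrix.SpecialLinearGroup.coe_mul, ← Matrix.sub_apply, key]
      simp [Matrix.add_apply]
    rw [this]
    have hprod : ((A - 1) * (B - 1)) i j ∈ mulSet sqrt3 := by
      rw [Matrix.mul_apply]
      refine Finset.sum_induction _ _ (fun x y hx hy => mulSet_add hx hy) (mulSet_zero _) ?_
      intro k _
      refine three_subset_sqrt3 (sqrt3_mul_sqrt3 ?_ ?_)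
      · simpa [Matrix.sub_apply] using ha.2 i k
      · simpa [Matrix.sub_apply] using hb.2 k j
    refine mulSet_add (mulSet_add hprod ?_) ?_
    · simpa [Matrix.sub_apply] using ha.2 i j
    · simpa [Matrix.sub_apply] using hb.2 i j
  inv_mem' := by
    intro a ha
    refine ⟨GammaEis.inv_mem ha.1, ?_⟩
    intro i j
    set A : Matrix (Fin 3) (Fin 3) ℂ := ↑a with hA
    set B : Matrix (Fin 3) (Fin 3) ℂ := ↑(a⁻¹) with hB
    have hBA : B * A = 1 := by
      rw [hA, hB, ← Matrix.SpecialLinearGroup.coe_mul, inv_mul_cancel]; simp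
    have key : B - 1 = B * (1 - A) := by rw [Matrix.mul_sub, Matrix.mul_one, hBA]
    have hBent : ∀ i j, B i j ∈ Eis := ((GammaEis.inv_mem ha.1).1 : _)
    have : (B i j - (1 : Matrix (Fin 3) (Fin 3) ℂ) i j) = (B * (1 - A)) i j := by
      rw [← key]; simp [Matrix.sub_apply]
    rw [this, Matrix.mul_apply]
    refine Finset.sum_induction _ _ (fun x y hx hy => mulSet_add hx hy) (mulSet_zero _) ?_
    intro k _
    refine mulSet_mul_left (hBent i k) ?_
    have : (1 - A) k j = -(A k j - (1 : Matrix (Fin 3) (Fin 3) ℂ) k j) := by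
      simp [Matrix.sub_apply]
    rw [this]
    exact mulSet_neg (ha.2 k j)

/-- The index 3 subgroup `Υ = {g ∈ Γ(√-3) : g₁₁ ≡ 1 mod 3}` of `Γ(√-3)`. -/
def Upsilon : Subgroup (SLC 3) where
  carrier := {g | g ∈ GammaS3 ∧ ((↑g : Matrix (Fin 3) (Fin 3) ℂ) 0 0 - 1) ∈ mulSet 3}
  one_mem' := ⟨GammaS3.one_mem, by simp [mulSet_zero]⟩
  mul_mem' := by
    intro a b ha hb
    refine ⟨GammaS3.mul_mem ha.1 hb.1, ?_⟩
    set A : Matrix (Fin 3) (Fin 3) ℂ := ↑a with hA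
    set B : Matrix (Fin 3) (Fin 3) ℂ := ↑b with hB
    have hAe : ∀ i j, A i j ∈ Eis := ha.1.1.1
    have hBe : ∀ i j, B i j ∈ Eis := hb.1.1.1
    have hoffA : ∀ i j, i ≠ j → A i j ∈ mulSet sqrt3 := by
      intro i j hij
      have := ha.1.2 i j
      simpa [Matrix.one_apply, hij] using this
    have hoffB : ∀ i j, i ≠ j → B i j ∈ mulSet sqrt3 := by
      intro i j hij
      have := hb.1.2 i j
      simpa [Matrix.one_apply, hij] using this
    have hmul : (↑(a * b) : Matrix (Fin 3) (Fin 3) ℂ) 0 0 - 1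
        = (A 0 0 - 1) * (B 0 0 - 1) + (A 0 0 - 1) + (B 0 0 - 1)
          + A 0 1 * B 1 0 + A 0 2 * B 2 0 := by
      rw [Matrix.SpecialLinearGroup.coe_mul, Matrix.mul_apply, Fin.sum_univ_three]
      ring
    rw [hmul]
    refine mulSet_add (mulSet_add (mulSet_add (mulSet_add ?_ ha.2) hb.2) ?_) ?_
    · exact mulSet_mul_right ha.2 (Eis.sub_mem (hBe 0 0) Eis.one_mem)
    · exact sqrt3_mul_sqrt3 (hoffA 0 1 (by decide)) (hoffB 1 0 (by decide))
    · exact sqrt3_mul_sqrt3 (hoffA 0 2 (by decide)) (hoffB 2 0 (by decide))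
  inv_mem' := by
    intro a ha
    have hinv : a⁻¹ ∈ GammaS3 := GammaS3.inv_mem ha.1
    refine ⟨hinv, ?_⟩
    set A : Matrix (Fin 3) (Fin 3) ℂ := ↑a with hA
    set B : Matrix (Fin 3) (Fin 3) ℂ := ↑(a⁻¹) with hB
    have hBA : B * A = 1 := by
      rw [hA, hB, ← Matrix.SpecialLinearGroup.coe_mul, inv_mul_cancel]; simp
    have hBe : ∀ i j, B i j ∈ Eis := hinv.1.1
    have hoffA : ∀ i j, i ≠ j → A i j ∈ mulSet sqrt3 := by
      intro i j hij
      have := ha.1.2 i j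
      simpa [Matrix.one_apply, hij] using this
    have hoffB : ∀ i j, i ≠ j → B i j ∈ mulSet sqrt3 := by
      intro i j hij
      have := hinv.2 i j
      simpa [Matrix.one_apply, hij, -Matrix.SpecialLinearGroup.coe_inv] using this
    have h00 : B 0 0 * A 0 0 + B 0 1 * A 1 0 + B 0 2 * A 2 0 = 1 := by
      have := congrArg (fun M : Matrix (Fin 3) (Fin 3) ℂ => M 0 0) hBA
      simpa [Matrix.mul_apply, Fin.sum_univ_three, Matrix.one_apply] using this
    have key : B 0 0 - 1
        = -(B 0 0 * (A 0 0 - 1)) + -(B 0 1 * A 1 0) + -(B 0 2 * A 2 0) := by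
      linear_combination h00
    rw [key]
    refine mulSet_add (mulSet_add ?_ ?_) ?_
    · exact mulSet_neg (mulSet_mul_left (hBe 0 0) ha.2)
    · exact mulSet_neg (sqrt3_mul_sqrt3 (hoffB 0 1 (by decide)) (hoffA 1 0 (by decide)))
    · exact mulSet_neg (sqrt3_mul_sqrt3 (hoffB 0 2 (by decide)) (hoffA 2 0 (by decide)))
/-- The unipotent upper-triangular matrix `n(z,x)`. -/
def nMat (z : ℂ) (x : ℤ) : Matrix (Fin 3) (Fin 3) ℂ :=
  !![1, sqrt3 * z, (-3 * (z * starRingEnd ℂ z) + (x : ℂ) * sqrt3) / 2;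
     0, 1, sqrt3 * starRingEnd ℂ z;
     0, 0, 1]

/-- `n(z,x)` as an element of `SL₃(ℂ)`. -/
def nSL (z : ℂ) (x : ℤ) : SLC 3 :=
  ⟨nMat z x, by
    simp [nMat, Matrix.det_fin_three, Matrix.vecHead, Matrix.vecTail]⟩

/-- The transpose `n(z,x)ᵀ` as an element of `SL₃(ℂ)`. -/
def ntSL (z : ℂ) (x : ℤ) : SLC 3 :=
  ⟨(nMat z x)ᵀ, by
    rw [Matrix.det_transpose]
    simp [nMat, Matrix.det_fin_three, Matrix.vecHead, Matrix.vecTail]⟩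

/-- The congruence `x ≡ N(z) mod 2` (inside `ℤ[ζ]`). -/
def parityOK (z : ℂ) (x : ℤ) : Prop := ((x : ℂ) - z * starRingEnd ℂ z) ∈ mulSet 2

/-- The generating set of `Υ`: the matrices `n(z,x)` and their transposes, for
`z ∈ ℤ[ζ]` and `x ∈ ℤ` with `x ≡ N(z) mod 2`. -/
def genSet : Set (SLC 3) :=
  {g | ∃ (z : ℂ) (x : ℤ), z ∈ Eis ∧ parityOK z x ∧ (g = nSL z x ∨ g = ntSL z x)}

/-- The scalar matrix `ζ·I₃` as an element of `SL₃(ℂ)`. -/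
def zISL : SLC 3 :=
  ⟨zeta3 • (1 : Matrix (Fin 3) (Fin 3) ℂ), by
    rw [Matrix.det_smul]
    simp [zeta3_pow_three]⟩

/-- The centre `μ₃ = {I₃, ζI₃, ζ²I₃}` of `SU(2,1)`, generated by `ζ·I₃`. -/
def muThree : Subgroup (SLC 3) := Subgroup.zpowers zISL
lemma zeta3_im_pos : 0 < zeta3.im := by
  have him : zeta3.im = Real.sin (2 * Real.pi / 3) := by
    rw [zeta3, show 2 * (Real.pi : ℂ) * Complex.I / 3 = (2 * Real.pi / 3 : ℝ) * Complex.I by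
      push_cast; ring]
    rw [Complex.exp_ofReal_mul_I_im]
  rw [him]
  apply Real.sin_pos_of_pos_of_lt_pi
  · positivity
  · nlinarith [Real.pi_pos]

lemma sqrt3_im_pos : 0 < sqrt3.im := by
  have : sqrt3.im = 2 * zeta3.im := by simp [sqrt3]
  nlinarith [zeta3_im_pos]

lemma sqrt3_re : sqrt3.re = 0 := by
  have h := sqrt3_sq
  have h2 : (sqrt3 * sqrt3).im = (-3 : ℂ).im := by rw [h]
  simp [Complex.mul_im] at h2
  have := sqrt3_im_pos
  nlinarith

lemma sqrt3_im : sqrt3.im = Real.sqrt 3 := by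
  have h := sqrt3_sq
  have h2 : (sqrt3 * sqrt3).re = (-3 : ℂ).re := by rw [h]
  simp [Complex.mul_re, sqrt3_re] at h2
  have : sqrt3.im ^ 2 = 3 := by nlinarith
  nlinarith [Real.sq_sqrt (by norm_num : (3:ℝ) ≥ 0), Real.sqrt_nonneg 3, sqrt3_im_pos]

lemma sqrt3_eq : sqrt3 = (Real.sqrt 3 : ℝ) * Complex.I := by
  apply Complex.ext <;> simp [sqrt3_re, sqrt3_im]

lemma conj_sqrt3 : starRingEnd ℂ sqrt3 = -sqrt3 := by
  apply Complex.ext <;> simp [sqrt3_re]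

lemma normSq_sqrt3 : Complex.normSq sqrt3 = 3 := by
  rw [Complex.normSq_apply, sqrt3_re, sqrt3_im]
  nlinarith [Real.sq_sqrt (show (0:ℝ) ≤ 3 by norm_num)]

lemma sqrt3_ne_zero : sqrt3 ≠ 0 := by
  intro h
  have := sqrt3_im_pos
  rw [h] at this; simp at this

lemma zeta3_eq : zeta3 = (sqrt3 - 1) / 2 := by rw [sqrt3]; ring

lemma zeta3_re : zeta3.re = -(1/2) := by rw [zeta3_eq]; simp [sqrt3_re]; norm_num

lemma zeta3_im' : zeta3.im = Real.sqrt 3 / 2 := by rw [zeta3_eq]; simp [sqrt3_im]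

lemma intCast_mem_Eis (m : ℤ) : (m : ℂ) ∈ Eis := by
  exact_mod_cast intCast_mem Eis m

lemma mem_Eis_iff {x : ℂ} : x ∈ Eis ↔ ∃ m n : ℤ, x = (m : ℂ) + n * zeta3 := by
  constructor
  · intro hx
    induction hx using Subring.closure_induction with
    | mem y hy => rcases hy with rfl; exact ⟨0, 1, by simp⟩
    | zero => exact ⟨0, 0, by simp⟩
    | one => exact ⟨1, 0, by simp⟩
    | add a b _ _ ha hb =>
        obtain ⟨m, n, rfl⟩ := ha; obtain ⟨p, q, rfl⟩ := hb
        exact ⟨m + p, n + q, by push_cast; ring⟩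
    | neg a _ ha =>
        obtain ⟨m, n, rfl⟩ := ha; exact ⟨-m, -n, by push_cast; ring⟩
    | mul a b _ _ ha hb =>
        obtain ⟨m, n, rfl⟩ := ha; obtain ⟨p, q, rfl⟩ := hb
        refine ⟨m * p - n * q, m * q + n * p - n * q, ?_⟩
        push_cast
        linear_combination (n : ℂ) * q * zeta3_quad
  · rintro ⟨m, n, rfl⟩
    exact Eis.add_mem (intCast_mem_Eis m) (Eis.mul_mem (intCast_mem_Eis n) zeta3_mem_Eis)

lemma conj_zeta3' : starRingEnd ℂ zeta3 = -1 - zeta3 := by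
  rw [zeta3_conj]; linear_combination zeta3_quad

/-- trace and norm of an Eisenstein integer are integers. -/
lemma Eis_trace_norm {z : ℂ} (hz : z ∈ Eis) :
    ∃ a q : ℤ, z + starRingEnd ℂ z = (a : ℂ) ∧ z * starRingEnd ℂ z = (q : ℂ) ∧ 0 ≤ q := by
  obtain ⟨m, n, rfl⟩ := mem_Eis_iff.mp hz
  refine ⟨2 * m - n, m ^ 2 - m * n + n ^ 2, ?_, ?_, by nlinarith⟩
  · simp only [map_add, _root_.map_mul, map_intCast, conj_zeta3']
    push_cast; ring
  · simp only [map_add, _root_.map_mul, map_intCast, conj_zeta3']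
    push_cast
    linear_combination (-(n:ℂ)^2) * zeta3_quad

lemma Eis_normSq_nat {z : ℂ} (hz : z ∈ Eis) : ∃ q : ℕ, Complex.normSq z = (q : ℝ) := by
  obtain ⟨a, q, -, hq, hq0⟩ := Eis_trace_norm hz
  refine ⟨q.toNat, ?_⟩
  have h := congrArg Complex.re ((Complex.mul_conj z).symm.trans hq)
  simp only [Complex.ofReal_re, Complex.intCast_re] at h
  rw [h]
  exact_mod_cast congrArg (fun t : ℤ => (t : ℝ)) (Int.toNat_of_nonneg hq0).symm

lemma normSq_eq_mul_conj (z : ℂ) : (Complex.normSq z : ℂ) = z * starRingEnd ℂ z :=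
  (Complex.mul_conj z).symm

/-- elements of √-3·ℤ[ζ] have normSq divisible by 3 -/
lemma normSq_mulSet_sqrt3 {c : ℂ} (hc : c ∈ mulSet sqrt3) :
    ∃ q : ℕ, Complex.normSq c = 3 * (q : ℝ) := by
  obtain ⟨lam, hlam, rfl⟩ := hc
  obtain ⟨q, hq⟩ := Eis_normSq_nat hlam
  exact ⟨q, by rw [Complex.normSq_mul, normSq_sqrt3, hq]⟩

/-- elements ≡ 1 mod 3 have normSq ≡ 1 mod 3 -/
lemma normSq_one_mod3 {e : ℂ} (he : e - 1 ∈ mulSet 3) :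
    ∃ s : ℤ, Complex.normSq e = 3 * (s : ℝ) + 1 := by
  obtain ⟨lam, hlam, hle⟩ := he
  have he' : e = 1 + 3 * lam := by linear_combination hle
  obtain ⟨a, q, ha, hq, -⟩ := Eis_trace_norm hlam
  refine ⟨a + 3 * q, ?_⟩
  have key : (Complex.normSq e : ℂ) = 3 * ((a : ℂ) + 3 * q) + 1 := by
    rw [normSq_eq_mul_conj, he']
    simp only [map_add, _root_.map_mul, _root_.map_one, map_ofNat]
    linear_combination (3:ℂ) * ha + 9 * hq
  have := congrArg Complex.re key
  simpa using this

lemma strict_of_classes {x y : ℝ} {q : ℕ} {s : ℤ}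
    (hx : x = 3 * (q : ℝ)) (hy : y = 3 * (s : ℝ) + 1) (hle : x ≤ y) : x < y := by
  rcases lt_or_eq_of_le hle with h | h
  · exact h
  · exfalso
    rw [hx, hy] at h
    have : 3 * (q : ℤ) = 3 * s + 1 := by exact_mod_cast h
    omega

lemma claim1 (f s : ℝ) (hf0 : 0 ≤ f) (hf1 : f ≤ 1) (hs0 : 0 ≤ s) (hfs : f + 3*s ≤ 2) :
    f^2 + 3*s^2 ≤ 4/3 := by
  nlinarith [mul_nonneg hs0 (by linarith : (0:ℝ) ≤ 2 - f - 3*s),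
             mul_nonneg (by linarith : (0:ℝ) ≤ 2 - f) (by linarith : (0:ℝ) ≤ 2 - f - 3*s),
             mul_nonneg hf0 (by linarith : (0:ℝ) ≤ 1 - f)]

lemma pairLemma (f s : ℝ) (hf0 : 0 ≤ f) (hf1 : f ≤ 1) (hs0 : 0 ≤ s) (hs1 : s ≤ 1) :
    f^2 + 3*s^2 ≤ 4/3 ∨ (1-f)^2 + 3*(1-s)^2 ≤ 4/3 := by
  rcases le_or_gt (f + 3*s) 2 with h | h
  · exact Or.inl (claim1 f s hf0 hf1 hs0 h)
  · exact Or.inr (claim1 (1-f) (1-s) (by linarith) (by linarith) (by linarith) (by linarith))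

lemma parity_reduction (u v : ℝ) :
    ∃ a b : ℤ, Even (a + b) ∧ (u - a)^2 + 3*(v - b)^2 ≤ 4/3 := by
  set n : ℤ := ⌊u⌋ with hn
  set b : ℤ := ⌊v⌋ with hb
  set f : ℝ := u - n with hf
  set s : ℝ := v - b with hs
  have hf0 : 0 ≤ f := sub_nonneg.mpr (Int.floor_le u)
  have hf1 : f < 1 := by rw [hf]; linarith [Int.lt_floor_add_one u]
  have hs0 : 0 ≤ s := sub_nonneg.mpr (Int.floor_le v)
  have hs1 : s < 1 := by rw [hs]; linarith [Int.lt_floor_add_one v]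
  rcases Int.even_or_odd (n + b) with hpar | hpar
  · rcases pairLemma f s hf0 hf1.le hs0 hs1.le with h | h
    · exact ⟨n, b, hpar, by have : u - n = f := rfl; nlinarith [h]⟩
    · refine ⟨n + 1, b + 1, by rcases hpar with ⟨r, hr⟩; exact ⟨r + 1, by omega⟩, ?_⟩
      have h1 : u - (↑(n+1) : ℤ) = -(1 - f) := by push_cast; simp [hf]; ring
      have h2 : v - (↑(b+1) : ℤ) = -(1 - s) := by push_cast; simp [hs]; ring
      push_cast at h1 h2 ⊢
      nlinarith [h]
  · rcases pairLemma (1-f) s (by linarith) (by linarith) hs0 hs1.le with h | h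
    · refine ⟨n + 1, b, by rcases hpar with ⟨r, hr⟩; exact ⟨r + 1, by omega⟩, ?_⟩
      push_cast
      nlinarith [h]
    · refine ⟨n, b + 1, by rcases hpar with ⟨r, hr⟩; exact ⟨r + 1, by omega⟩, ?_⟩
      push_cast
      nlinarith [h]

lemma sqrt3_pos : (0:ℝ) < Real.sqrt 3 := Real.sqrt_pos.mpr (by norm_num)

lemma sq_sqrt3 : Real.sqrt 3 ^ 2 = 3 := Real.sq_sqrt (by norm_num)

lemma Eis_covering (p : ℂ) : ∃ lam ∈ Eis, Complex.normSq (p - lam) ≤ 1/3 := by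
  obtain ⟨a, b, hpar, hbound⟩ := parity_reduction (2 * p.re) (2 * p.im / Real.sqrt 3)
  obtain ⟨r, hr⟩ := hpar
  set lam : ℂ := (r : ℂ) + (b : ℂ) * zeta3 with hlam
  have hmem : lam ∈ Eis := mem_Eis_iff.mpr ⟨r, b, rfl⟩
  refine ⟨lam, hmem, ?_⟩
  have hre : lam.re = (r : ℝ) - (b : ℝ)/2 := by
    simp [hlam, Complex.add_re, Complex.mul_re, zeta3_re, zeta3_im']
    ring
  have him : lam.im = (b : ℝ) * (Real.sqrt 3 / 2) := by
    simp [hlam, Complex.add_im, Complex.mul_im, zeta3_re, zeta3_im']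
  have h2mr : (r : ℝ) * 2 - b = a := by
    have : (a : ℝ) + b = r + r := by exact_mod_cast congrArg (fun t : ℤ => (t:ℝ)) hr
    linarith
  have hsq : Real.sqrt 3 * Real.sqrt 3 = 3 := Real.mul_self_sqrt (by norm_num)
  have hrecalc : (p - lam).re = (2 * p.re - a) / 2 := by
    simp [Complex.sub_re, hre]
    push_cast at h2mr ⊢
    linarith
  have himcalc : (p - lam).im = (Real.sqrt 3 / 2) * (2 * p.im / Real.sqrt 3 - b) := by
    simp [Complex.sub_im, him]
    field_simp
  rw [Complex.normSq_apply, hrecalc, himcalc]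
  nlinarith [hbound, sq_sqrt3, sq_nonneg (2 * p.im / Real.sqrt 3 - b), sq_nonneg (2*p.re - a)]

lemma vertical_reduction (y : ℝ) : ∃ k : ℤ, |y + k * Real.sqrt 3| ≤ Real.sqrt 3 / 2 := by
  refine ⟨-round (y / Real.sqrt 3), ?_⟩
  have h := abs_sub_round (y / Real.sqrt 3)
  have hs := sqrt3_pos
  have hy : y + (-round (y / Real.sqrt 3) : ℤ) * Real.sqrt 3
      = (y / Real.sqrt 3 - round (y / Real.sqrt 3)) * Real.sqrt 3 := by
    push_cast
    field_simp
    ring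
  rw [hy, abs_mul, abs_of_pos hs]
  calc |y / Real.sqrt 3 - ↑(round (y / Real.sqrt 3))| * Real.sqrt 3
      ≤ (1/2) * Real.sqrt 3 := by nlinarith
    _ = Real.sqrt 3 / 2 := by ring

lemma Jmat2_eq : Jmat 2 = !![0,0,1;0,1,0;1,0,0] := by
  ext i j
  fin_cases i <;> fin_cases j <;>
    simp [Jmat, Fin.last, Matrix.vecHead, Matrix.vecTail]

/-- g J gᴴ = J for g in GammaEis -/
lemma gJgH {g : SLC 3} (hg : g ∈ GammaEis) :
    (↑g : Matrix (Fin 3) (Fin 3) ℂ) * Jmat 2 * (↑g : Matrix (Fin 3) (Fin 3) ℂ)ᴴ = Jmat 2 := by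
  have hform := hg.2
  set A : Matrix (Fin 3) (Fin 3) ℂ := ↑g with hA
  have h1 : (Jmat 2 * Aᴴ * Jmat 2) * A = 1 := by
    calc (Jmat 2 * Aᴴ * Jmat 2) * A = Jmat 2 * (Aᴴ * Jmat 2 * A) := by
          simp only [Matrix.mul_assoc]
      _ = Jmat 2 * Jmat 2 := by rw [hform]
      _ = 1 := Jmat2_mul_self
  have h2 : A * (Jmat 2 * Aᴴ * Jmat 2) = 1 := mul_eq_one_comm.mp h1
  calc A * Jmat 2 * Aᴴ = A * Jmat 2 * Aᴴ * (Jmat 2 * Jmat 2) := by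
        rw [Jmat2_mul_self, Matrix.mul_one]
    _ = (A * (Jmat 2 * Aᴴ * Jmat 2)) * Jmat 2 := by simp only [Matrix.mul_assoc]
    _ = Jmat 2 := by rw [h2, Matrix.one_mul]

/-- row-2 isotropy : c ē + d d̄ + e c̄ = 0 -/
lemma row_iso {g : SLC 3} (hg : g ∈ GammaEis) :
    (↑g : Matrix (Fin 3) (Fin 3) ℂ) 2 0 * starRingEnd ℂ ((↑g : Matrix (Fin 3) (Fin 3) ℂ) 2 2)
    + (↑g : Matrix (Fin 3) (Fin 3) ℂ) 2 1 * starRingEnd ℂ ((↑g : Matrix (Fin 3) (Fin 3) ℂ) 2 1)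
    + (↑g : Matrix (Fin 3) (Fin 3) ℂ) 2 2 * starRingEnd ℂ ((↑g : Matrix (Fin 3) (Fin 3) ℂ) 2 0)
    = 0 := by
  have h := congrArg (fun M : Matrix (Fin 3) (Fin 3) ℂ => M 2 2) (gJgH hg)
  simp only [Matrix.mul_apply, Fin.sum_univ_succ, Fin.sum_univ_zero,
    Matrix.conjTranspose_apply, Jmat2_eq] at h
  simp [Matrix.vecHead, Matrix.vecTail] at h
  linear_combination h

/-- the (0,2) relation: conj(g00)*g22 + conj(g10)*g12 + conj(g20)*g02 = 1 -/
lemma rel02 {g : SLC 3} (hg : g ∈ GammaEis) :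
    starRingEnd ℂ ((↑g : Matrix (Fin 3) (Fin 3) ℂ) 0 0) * (↑g : Matrix (Fin 3) (Fin 3) ℂ) 2 2
    + starRingEnd ℂ ((↑g : Matrix (Fin 3) (Fin 3) ℂ) 1 0) * (↑g : Matrix (Fin 3) (Fin 3) ℂ) 1 2
    + starRingEnd ℂ ((↑g : Matrix (Fin 3) (Fin 3) ℂ) 2 0) * (↑g : Matrix (Fin 3) (Fin 3) ℂ) 0 2
    = 1 := by
  have h := congrArg (fun M : Matrix (Fin 3) (Fin 3) ℂ => M 0 2) hg.2
  simp only [Matrix.mul_apply, Fin.sum_univ_succ, Fin.sum_univ_zero,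
    Matrix.conjTranspose_apply, Jmat2_eq] at h
  simp [Matrix.vecHead, Matrix.vecTail] at h
  linear_combination h

lemma conj_mulSet_sqrt3 {x : ℂ} (hx : x ∈ mulSet sqrt3) : starRingEnd ℂ x ∈ mulSet sqrt3 := by
  obtain ⟨a, ha, rfl⟩ := hx
  exact ⟨-(starRingEnd ℂ a), Eis.neg_mem (Eis_conj_mem ha), by
    rw [_root_.map_mul, conj_sqrt3]; ring⟩

lemma conj_mulSet_3 {x : ℂ} (hx : x ∈ mulSet 3) : starRingEnd ℂ x ∈ mulSet 3 := by
  obtain ⟨a, ha, rfl⟩ := hx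
  exact ⟨starRingEnd ℂ a, Eis_conj_mem ha, by rw [_root_.map_mul, map_ofNat]⟩

lemma off_diag_Ups {g : SLC 3} (hg : g ∈ Upsilon) {i j : Fin 3} (hij : i ≠ j) :
    (↑g : Matrix (Fin 3) (Fin 3) ℂ) i j ∈ mulSet sqrt3 := by
  have := hg.1.2 i j
  simpa [Matrix.one_apply, hij] using this

lemma diag_Ups {g : SLC 3} (hg : g ∈ Upsilon) (i : Fin 3) :
    (↑g : Matrix (Fin 3) (Fin 3) ℂ) i i - 1 ∈ mulSet sqrt3 := by
  have := hg.1.2 i i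
  simpa [Matrix.one_apply] using this

lemma entries_Ups {g : SLC 3} (hg : g ∈ Upsilon) (i j : Fin 3) :
    (↑g : Matrix (Fin 3) (Fin 3) ℂ) i j ∈ Eis := hg.1.1.1 i j

/-- g₃₃ ≡ 1 mod 3 for g ∈ Υ -/
lemma U3 {g : SLC 3} (hg : g ∈ Upsilon) :
    (↑g : Matrix (Fin 3) (Fin 3) ℂ) 2 2 - 1 ∈ mulSet 3 := by
  have h := rel02 hg.1.1
  set M : Matrix (Fin 3) (Fin 3) ℂ := ↑g with hM
  have key : M 2 2 - 1 =
      -((starRingEnd ℂ (M 0 0) - 1) * M 2 2)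
      - starRingEnd ℂ (M 1 0) * M 1 2 - starRingEnd ℂ (M 2 0) * M 0 2 := by
    linear_combination h
  rw [key]
  refine mulSet_add (mulSet_add (mulSet_neg ?_) (mulSet_neg ?_)) (mulSet_neg ?_)
  · refine mulSet_mul_right ?_ (entries_Ups hg 2 2)
    have : starRingEnd ℂ (M 0 0) - 1 = starRingEnd ℂ (M 0 0 - 1) := by
      rw [map_sub, _root_.map_one]
    rw [this]
    exact conj_mulSet_3 hg.2
  · exact sqrt3_mul_sqrt3 (conj_mulSet_sqrt3 (off_diag_Ups hg (by decide)))
      (off_diag_Ups hg (by decide))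
  · exact sqrt3_mul_sqrt3 (conj_mulSet_sqrt3 (off_diag_Ups hg (by decide)))
      (off_diag_Ups hg (by decide))

lemma Complex.eq_zero_of_mul_conj_eq_zero {d : ℂ} (h : d * starRingEnd ℂ d = 0) : d = 0 := by
  have := Complex.mul_conj d
  rw [h] at this
  have h2 : Complex.normSq d = 0 := by exact_mod_cast this.symm
  exact Complex.normSq_eq_zero.mp h2

/-- g₃₃ ≠ 0 for g ∈ Υ -/
lemma U5 {g : SLC 3} (hg : g ∈ Upsilon) : (↑g : Matrix (Fin 3) (Fin 3) ℂ) 2 2 ≠ 0 := by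
  intro he
  set M : Matrix (Fin 3) (Fin 3) ℂ := ↑g with hM
  have hiso := row_iso hg.1.1
  rw [← hM] at hiso
  rw [he] at hiso
  simp only [map_zero, mul_zero, zero_mul, add_zero, zero_add] at hiso
  have hd : M 2 1 = 0 := Complex.eq_zero_of_mul_conj_eq_zero hiso
  have hdet : M.det = 1 := g.prop
  rw [Matrix.det_fin_three, he, hd] at hdet
  simp only [mul_zero, zero_mul, add_zero, zero_add, sub_zero, zero_sub] at hdet
  have hdet2 : M 2 0 * (M 0 1 * M 1 2 - M 0 2 * M 1 1) = 1 := by linear_combination hdet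
  have h1 : Complex.normSq (M 2 0) * Complex.normSq (M 0 1 * M 1 2 - M 0 2 * M 1 1) = 1 := by
    rw [← Complex.normSq_mul, hdet2, Complex.normSq_one]
  obtain ⟨q, hq⟩ := normSq_mulSet_sqrt3 (off_diag_Ups hg (show (2:Fin 3) ≠ 0 by decide))
  have hMEis : M 0 1 * M 1 2 - M 0 2 * M 1 1 ∈ Eis :=
    Eis.sub_mem (Eis.mul_mem (entries_Ups hg 0 1) (entries_Ups hg 1 2))
      (Eis.mul_mem (entries_Ups hg 0 2) (entries_Ups hg 1 1))
  obtain ⟨r, hr⟩ := Eis_normSq_nat hMEis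
  rw [hq, hr] at h1
  have h3 : (3 * q * r : ℕ) = 1 := by exact_mod_cast h1
  have : (3:ℕ) ∣ 1 := ⟨q * r, by rw [← h3]; ring⟩
  norm_num at this

lemma zeta_sub_one : zeta3 - 1 = sqrt3 * (-zeta3^2) := by
  rw [sqrt3]
  linear_combination (2 : ℂ) * zeta3_pow_three + zeta3_quad

lemma m_decomp {z : ℂ} {x : ℤ} (hz : z ∈ Eis) (hx : parityOK z x) :
    ∃ y ∈ Eis, (-3 * (z * starRingEnd ℂ z) + (x : ℂ) * sqrt3) / 2
      = (z * starRingEnd ℂ z) * (zeta3 - 1) + y * sqrt3 := by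
  obtain ⟨y, hy, hxy⟩ := hx
  refine ⟨y, hy, ?_⟩
  have hx2 : (x : ℂ) = z * starRingEnd ℂ z + 2 * y := by linear_combination hxy
  rw [hx2, sqrt3]
  ring

lemma mEntry_mem_Eis {z : ℂ} {x : ℤ} (hz : z ∈ Eis) (hx : parityOK z x) :
    (-3 * (z * starRingEnd ℂ z) + (x : ℂ) * sqrt3) / 2 ∈ Eis := by
  obtain ⟨y, hy, heq⟩ := m_decomp hz hx
  rw [heq]
  exact Eis.add_mem
    (Eis.mul_mem (Eis.mul_mem hz (Eis_conj_mem hz)) (Eis.sub_mem zeta3_mem_Eis Eis.one_mem))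
    (Eis.mul_mem hy sqrt3_mem_Eis)

lemma mEntry_mem_sqrt3 {z : ℂ} {x : ℤ} (hz : z ∈ Eis) (hx : parityOK z x) :
    (-3 * (z * starRingEnd ℂ z) + (x : ℂ) * sqrt3) / 2 ∈ mulSet sqrt3 := by
  obtain ⟨y, hy, heq⟩ := m_decomp hz hx
  rw [heq, zeta_sub_one]
  refine ⟨z * starRingEnd ℂ z * (-zeta3^2) + y, ?_, by ring⟩
  exact Eis.add_mem (Eis.mul_mem (Eis.mul_mem hz (Eis_conj_mem hz))
    (Eis.neg_mem (pow_mem zeta3_mem_Eis 2))) hy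

lemma mE' {z : ℂ} {x : ℤ} (hz : z ∈ Eis) (hx : parityOK z x) :
    (-(3 * (z * starRingEnd ℂ z)) + (x : ℂ) * sqrt3) / 2 ∈ Eis := by
  rw [show (-(3 * (z * starRingEnd ℂ z)) + (x:ℂ) * sqrt3) / 2
       = (-3 * (z * starRingEnd ℂ z) + (x:ℂ) * sqrt3) / 2 from by ring]
  exact mEntry_mem_Eis hz hx

lemma m3' {z : ℂ} {x : ℤ} (hz : z ∈ Eis) (hx : parityOK z x) :
    (-(3 * (z * starRingEnd ℂ z)) + (x : ℂ) * sqrt3) / 2 ∈ mulSet sqrt3 := by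
  rw [show (-(3 * (z * starRingEnd ℂ z)) + (x:ℂ) * sqrt3) / 2
       = (-3 * (z * starRingEnd ℂ z) + (x:ℂ) * sqrt3) / 2 from by ring]
  exact mEntry_mem_sqrt3 hz hx

lemma sqrt3_mem_mulSet : ∀ w, w ∈ Eis → sqrt3 * w ∈ mulSet sqrt3 := fun w hw => ⟨w, hw, rfl⟩

lemma nSL_mem_Upsilon {z : ℂ} {x : ℤ} (hz : z ∈ Eis) (hx : parityOK z x) :
    nSL z x ∈ Upsilon := by
  have hzc := Eis_conj_mem hz
  have hmE := mEntry_mem_Eis hz hx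
  have hm3 := mEntry_mem_sqrt3 hz hx
  refine ⟨⟨⟨?_, ?_⟩, ?_⟩, ?_⟩
  · intro i j
    fin_cases i <;> fin_cases j <;>
      simp [nSL, nMat, Matrix.vecHead, Matrix.vecTail] <;>
      first
      | exact Eis.one_mem
      | exact Eis.zero_mem
      | exact Eis.mul_mem sqrt3_mem_Eis hz
      | exact Eis.mul_mem sqrt3_mem_Eis hzc
      | exact hmE
      | exact mE' hz hx
  · ext i j
    fin_cases i <;> fin_cases j <;>
    · simp only [Matrix.mul_apply, Fin.sum_univ_succ, Fin.sum_univ_zero,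
        Matrix.conjTranspose_apply, Jmat2_eq, nSL, nMat]
      simp [Matrix.vecHead, Matrix.vecTail, conj_sqrt3, map_div₀]
      all_goals first
      | linear_combination (-(z * starRingEnd ℂ z)) * sqrt3_sq
      | linear_combination (z * starRingEnd ℂ z) * sqrt3_sq
      | ring
  · intro i j
    fin_cases i <;> fin_cases j <;>
      simp [nSL, nMat, Matrix.vecHead, Matrix.vecTail, Matrix.one_apply] <;>
      first
      | exact mulSet_zero _
      | exact sqrt3_mem_mulSet _ hz
      | exact sqrt3_mem_mulSet _ hzc
      | exact hm3
      | exact m3' hz hx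
  · simp [nSL, nMat]
    exact mulSet_zero _

lemma ntSL_mem_Upsilon {z : ℂ} {x : ℤ} (hz : z ∈ Eis) (hx : parityOK z x) :
    ntSL z x ∈ Upsilon := by
  have hzc := Eis_conj_mem hz
  have hmE := mEntry_mem_Eis hz hx
  have hm3 := mEntry_mem_sqrt3 hz hx
  refine ⟨⟨⟨?_, ?_⟩, ?_⟩, ?_⟩
  · intro i j
    fin_cases i <;> fin_cases j <;>
      simp [ntSL, nMat, Matrix.transpose_apply, Matrix.vecHead, Matrix.vecTail] <;>
      first
      | exact Eis.one_mem
      | exact Eis.zero_mem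
      | exact Eis.mul_mem sqrt3_mem_Eis hz
      | exact Eis.mul_mem sqrt3_mem_Eis hzc
      | exact hmE
      | exact mE' hz hx
  · ext i j
    fin_cases i <;> fin_cases j <;>
    · simp only [Matrix.mul_apply, Fin.sum_univ_succ, Fin.sum_univ_zero,
        Matrix.conjTranspose_apply, Jmat2_eq, ntSL, nMat, Matrix.transpose_apply]
      simp [Matrix.vecHead, Matrix.vecTail, conj_sqrt3, map_div₀]
      all_goals first
      | linear_combination (-(z * starRingEnd ℂ z)) * sqrt3_sq
      | linear_combination (z * starRingEnd ℂ z) * sqrt3_sq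
      | ring
  · intro i j
    fin_cases i <;> fin_cases j <;>
      simp [ntSL, nMat, Matrix.transpose_apply, Matrix.vecHead, Matrix.vecTail,
        Matrix.one_apply] <;>
      first
      | exact mulSet_zero _
      | exact sqrt3_mem_mulSet _ hz
      | exact sqrt3_mem_mulSet _ hzc
      | exact hm3
      | exact m3' hz hx
  · simp [ntSL, nMat]
    exact mulSet_zero _

lemma key_bound {c d e : ℂ} (hc : c ≠ 0)
    (hiso : c * starRingEnd ℂ e + d * starRingEnd ℂ d + e * starRingEnd ℂ c = 0)
    (hd : Complex.normSq d ≤ Complex.normSq c)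
    (him : |(e/c).im| ≤ Real.sqrt 3 / 2) :
    Complex.normSq e ≤ Complex.normSq c := by
  set q : ℂ := e / c with hq
  have he : e = c * q := by rw [hq, mul_div_cancel₀ e hc]
  have hcc : c * starRingEnd ℂ c = (Complex.normSq c : ℂ) := Complex.mul_conj c
  have hdd : d * starRingEnd ℂ d = (Complex.normSq d : ℂ) := Complex.mul_conj d
  have hiso' : c * (starRingEnd ℂ c * starRingEnd ℂ q) + d * starRingEnd ℂ d
      + (c * q) * starRingEnd ℂ c = 0 := by
    have h0 : c * starRingEnd ℂ (c * q) + d * starRingEnd ℂ d + (c * q) * starRingEnd ℂ c = 0 := by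
      rw [← he]; exact hiso
    rw [_root_.map_mul] at h0
    exact h0
  have hre0 : (Complex.normSq c : ℂ) * (q + starRingEnd ℂ q) = -(Complex.normSq d : ℂ) := by
    linear_combination hiso' - (q + starRingEnd ℂ q) * hcc - hdd
  have hre1 : (Complex.normSq c : ℂ) * ((2 * q.re : ℝ) : ℂ) = -(Complex.normSq d : ℂ) := by
    rw [← hre0, Complex.add_conj]
  have hre2 : Complex.normSq c * (2 * q.re) = -Complex.normSq d := by
    have := hre1
    rw [show ((Complex.normSq c : ℝ) : ℂ) * ((2 * q.re : ℝ) : ℂ)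
        = ((Complex.normSq c * (2 * q.re) : ℝ) : ℂ) by push_cast; ring] at this
    rw [show (-(Complex.normSq d : ℝ) : ℂ) = ((-Complex.normSq d : ℝ) : ℂ) by push_cast; ring] at this
    exact_mod_cast this
  have hcpos : 0 < Complex.normSq c := Complex.normSq_pos.mpr hc
  have hdpos : 0 ≤ Complex.normSq d := Complex.normSq_nonneg d
  have hsq : (Complex.normSq c * (2 * q.re))^2 = (Complex.normSq d)^2 := by rw [hre2]; ring
  have hnd2 : Complex.normSq d^2 ≤ Complex.normSq c^2 := by nlinarith
  have hresq : q.re ^ 2 ≤ (1/2)^2 := by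
    nlinarith [hsq, hnd2, mul_pos hcpos hcpos, sq_nonneg q.re]
  have himsq : q.im ^ 2 ≤ 3 / 4 := by
    have h2 : q.im ^ 2 = |q.im| ^ 2 := (_root_.sq_abs _).symm
    rw [h2]
    nlinarith [sq_sqrt3, abs_nonneg q.im, Real.sqrt_nonneg 3]
  have hq1 : Complex.normSq q ≤ 1 := by
    rw [Complex.normSq_apply]
    nlinarith
  calc Complex.normSq e = Complex.normSq c * Complex.normSq q := by
        rw [he, Complex.normSq_mul]
    _ ≤ Complex.normSq c * 1 := by nlinarith
    _ = Complex.normSq c := mul_one _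

lemma classes_ne {x y : ℝ} {q : ℕ} {s : ℤ}
    (hx : x = 3 * (q : ℝ)) (hy : y = 3 * (s : ℝ) + 1) : x ≠ y := by
  intro h
  rw [hx, hy] at h
  have : 3 * (q : ℤ) = 3 * s + 1 := by exact_mod_cast h
  omega

/-- entries of the bottom row of g * n(z,x) -/
lemma mulA_entries (g : SLC 3) (z : ℂ) (x : ℤ) :
    (↑(g * nSL z x) : Matrix (Fin 3) (Fin 3) ℂ) 2 0 = (↑g : Matrix (Fin 3) (Fin 3) ℂ) 2 0 ∧
    (↑(g * nSL z x) : Matrix (Fin 3) (Fin 3) ℂ) 2 1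
      = (↑g : Matrix (Fin 3) (Fin 3) ℂ) 2 0 * (sqrt3 * z)
        + (↑g : Matrix (Fin 3) (Fin 3) ℂ) 2 1 ∧
    (↑(g * nSL z x) : Matrix (Fin 3) (Fin 3) ℂ) 2 2
      = (↑g : Matrix (Fin 3) (Fin 3) ℂ) 2 0
          * ((-3 * (z * starRingEnd ℂ z) + (x:ℂ) * sqrt3)/2)
        + (↑g : Matrix (Fin 3) (Fin 3) ℂ) 2 1 * (sqrt3 * starRingEnd ℂ z)
        + (↑g : Matrix (Fin 3) (Fin 3) ℂ) 2 2 := by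
  refine ⟨?_, ?_, ?_⟩ <;>
  · rw [Matrix.SpecialLinearGroup.coe_mul]
    simp [Matrix.mul_apply, Fin.sum_univ_succ, nSL, nMat, Matrix.vecHead, Matrix.vecTail]
    try ring

/-- entries of the bottom row of g * n(w,x)ᵀ -/
lemma mulB_entries (g : SLC 3) (w : ℂ) (x : ℤ) :
    (↑(g * ntSL w x) : Matrix (Fin 3) (Fin 3) ℂ) 2 0
      = (↑g : Matrix (Fin 3) (Fin 3) ℂ) 2 0
        + (↑g : Matrix (Fin 3) (Fin 3) ℂ) 2 1 * (sqrt3 * w)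
        + (↑g : Matrix (Fin 3) (Fin 3) ℂ) 2 2
          * ((-3 * (w * starRingEnd ℂ w) + (x:ℂ) * sqrt3)/2) ∧
    (↑(g * ntSL w x) : Matrix (Fin 3) (Fin 3) ℂ) 2 1
      = (↑g : Matrix (Fin 3) (Fin 3) ℂ) 2 1
        + (↑g : Matrix (Fin 3) (Fin 3) ℂ) 2 2 * (sqrt3 * starRingEnd ℂ w) ∧
    (↑(g * ntSL w x) : Matrix (Fin 3) (Fin 3) ℂ) 2 2
      = (↑g : Matrix (Fin 3) (Fin 3) ℂ) 2 2 := by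
  refine ⟨?_, ?_, ?_⟩ <;>
  · rw [Matrix.SpecialLinearGroup.coe_mul]
    simp [Matrix.mul_apply, Fin.sum_univ_succ, ntSL, nMat, Matrix.transpose_apply,
      Matrix.vecHead, Matrix.vecTail]
    try ring

lemma moveA {g : SLC 3} (hg : g ∈ Upsilon)
    (hc : (↑g : Matrix (Fin 3) (Fin 3) ℂ) 2 0 ≠ 0) :
    ∃ z x, z ∈ Eis ∧ parityOK z x ∧
      Complex.normSq ((↑(g * nSL z x) : Matrix (Fin 3) (Fin 3) ℂ) 2 2)
        < Complex.normSq ((↑g : Matrix (Fin 3) (Fin 3) ℂ) 2 0) ∧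
      (↑(g * nSL z x) : Matrix (Fin 3) (Fin 3) ℂ) 2 0
        = (↑g : Matrix (Fin 3) (Fin 3) ℂ) 2 0 := by
  set M : Matrix (Fin 3) (Fin 3) ℂ := ↑g with hM
  set c := M 2 0 with hcdef
  set d := M 2 1 with hddef
  set e := M 2 2 with hedef
  have hct : c * sqrt3 ≠ 0 := mul_ne_zero hc sqrt3_ne_zero
  -- choose z
  obtain ⟨lam, hlam, hcov⟩ := Eis_covering (d / (c * sqrt3))
  set z : ℂ := -lam with hzdef
  have hz : z ∈ Eis := Eis.neg_mem hlam
  -- norm bound on new d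
  have hdfac : d + c * (sqrt3 * z) = (c * sqrt3) * (d / (c * sqrt3) - lam) := by
    rw [hzdef, mul_sub, mul_div_cancel₀ d hct]; ring
  have hd' : Complex.normSq (d + c * (sqrt3 * z)) ≤ Complex.normSq c := by
    rw [hdfac, Complex.normSq_mul, Complex.normSq_mul, normSq_sqrt3]
    nlinarith [Complex.normSq_nonneg c, hcov]
  -- choose x
  obtain ⟨a, Nz, htr, hnz, hNz0⟩ := Eis_trace_norm hz
  set E₀ : ℂ := e + c * ((Nz : ℂ) * (zeta3 - 1)) + d * (sqrt3 * starRingEnd ℂ z) with hE₀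
  obtain ⟨k, hk⟩ := vertical_reduction ((E₀ / c).im)
  set x : ℤ := Nz + 2 * k with hxdef
  have hpar : parityOK z x := by
    refine ⟨(k : ℂ), intCast_mem_Eis k, ?_⟩
    rw [hnz, hxdef]
    push_cast
    ring
  -- the m-entry identity
  have hm : (-3 * (z * starRingEnd ℂ z) + (x:ℂ) * sqrt3)/2
      = (Nz : ℂ) * (zeta3 - 1) + (k : ℂ) * sqrt3 := by
    rw [hnz, hxdef, sqrt3]
    push_cast
    ring
  obtain ⟨h20, h21, h22⟩ := mulA_entries g z x
  simp only [← hM] at h20 h21 h22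
  simp only [← hcdef, ← hddef, ← hedef] at h20 h21 h22
  set e' := (↑(g * nSL z x) : Matrix (Fin 3) (Fin 3) ℂ) 2 2 with he'def
  have he' : e' = E₀ + (k:ℂ) * (c * sqrt3) := by
    rw [h22, hm, hE₀]
    ring
  refine ⟨z, x, hz, hpar, ?_, h20⟩
  -- membership of product
  have hg' : g * nSL z x ∈ Upsilon := Upsilon.mul_mem hg (nSL_mem_Upsilon hz hpar)
  -- isotropy of new row
  have hiso := row_iso hg'.1.1
  rw [h20, h21] at hiso
  rw [← he'def] at hiso
  -- im part bound
  have hqim : |(e'/c).im| ≤ Real.sqrt 3 / 2 := by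
    have hsplit : e' / c = E₀ / c + (k:ℂ) * sqrt3 := by
      rw [he']
      field_simp
    have him2 : (e'/c).im = (E₀/c).im + (k : ℝ) * Real.sqrt 3 := by
      rw [hsplit, Complex.add_im, sqrt3_eq]
      simp
    rw [him2]
    exact hk
  -- apply key bound
  have hle : Complex.normSq e' ≤ Complex.normSq c := by
    apply key_bound hc ?_ hd' hqim
    simp only [map_add, _root_.map_mul] at hiso ⊢
    linear_combination hiso
  -- strictness
  obtain ⟨qq, hqq⟩ := normSq_mulSet_sqrt3 (off_diag_Ups hg (show (2:Fin 3) ≠ 0 by decide))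
  obtain ⟨ss, hss⟩ := normSq_one_mod3 (U3 hg')
  rw [← he'def] at hss
  have hne : Complex.normSq e' ≠ Complex.normSq c := by
    intro hcontra
    exact classes_ne hqq hss (by rw [← hcontra, hss])
  exact lt_of_le_of_ne hle hne

lemma moveB {g : SLC 3} (hg : g ∈ Upsilon) :
    ∃ w x, w ∈ Eis ∧ parityOK w x ∧
      Complex.normSq ((↑(g * ntSL w x) : Matrix (Fin 3) (Fin 3) ℂ) 2 0)
        ≤ Complex.normSq ((↑g : Matrix (Fin 3) (Fin 3) ℂ) 2 2) := by
  set M : Matrix (Fin 3) (Fin 3) ℂ := ↑g with hM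
  set c := M 2 0 with hcdef
  set d := M 2 1 with hddef
  set e := M 2 2 with hedef
  have he0 : e ≠ 0 := U5 hg
  have het : e * sqrt3 ≠ 0 := mul_ne_zero he0 sqrt3_ne_zero
  obtain ⟨lam, hlam, hcov⟩ := Eis_covering (d / (e * sqrt3))
  set w : ℂ := starRingEnd ℂ (-lam) with hwdef
  have hw : w ∈ Eis := Eis_conj_mem (Eis.neg_mem hlam)
  have hwc : starRingEnd ℂ w = -lam := by
    rw [hwdef, Complex.conj_conj]
  have hdfac : d + e * (sqrt3 * starRingEnd ℂ w) = (e * sqrt3) * (d / (e * sqrt3) - lam) := by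
    rw [hwc]
    rw [mul_sub, mul_div_cancel₀ d het]; ring
  have hd' : Complex.normSq (d + e * (sqrt3 * starRingEnd ℂ w)) ≤ Complex.normSq e := by
    rw [hdfac, Complex.normSq_mul, Complex.normSq_mul, normSq_sqrt3]
    nlinarith [Complex.normSq_nonneg e, hcov]
  obtain ⟨a, Nw, htr, hnw, hNw0⟩ := Eis_trace_norm hw
  set C₀ : ℂ := c + d * (sqrt3 * w) + e * ((Nw : ℂ) * (zeta3 - 1)) with hC₀
  obtain ⟨k, hk⟩ := vertical_reduction ((C₀ / e).im)
  set x : ℤ := Nw + 2 * k with hxdef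
  have hpar : parityOK w x := by
    refine ⟨(k : ℂ), intCast_mem_Eis k, ?_⟩
    rw [hnw, hxdef]
    push_cast
    ring
  have hm : (-3 * (w * starRingEnd ℂ w) + (x:ℂ) * sqrt3)/2
      = (Nw : ℂ) * (zeta3 - 1) + (k : ℂ) * sqrt3 := by
    rw [hnw, hxdef, sqrt3]
    push_cast
    ring
  obtain ⟨h20, h21, h22⟩ := mulB_entries g w x
  simp only [← hM] at h20 h21 h22
  simp only [← hcdef, ← hddef, ← hedef] at h20 h21 h22
  set c' := (↑(g * ntSL w x) : Matrix (Fin 3) (Fin 3) ℂ) 2 0 with hc'def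
  have hc' : c' = C₀ + (k:ℂ) * (e * sqrt3) := by
    rw [h20, hm, hC₀]
    ring
  refine ⟨w, x, hw, hpar, ?_⟩
  have hg' : g * ntSL w x ∈ Upsilon := Upsilon.mul_mem hg (ntSL_mem_Upsilon hw hpar)
  have hiso := row_iso hg'.1.1
  rw [h21, h22] at hiso
  rw [← hc'def] at hiso
  have hqim : |(c'/e).im| ≤ Real.sqrt 3 / 2 := by
    have hsplit : c' / e = C₀ / e + (k:ℂ) * sqrt3 := by
      rw [hc']
      field_simp
    have him2 : (c'/e).im = (C₀/e).im + (k : ℝ) * Real.sqrt 3 := by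
      rw [hsplit, Complex.add_im, sqrt3_eq]
      simp
    rw [him2]
    exact hk
  apply key_bound he0 ?_ hd' hqim
  simp only [map_add, _root_.map_mul] at hiso ⊢
  linear_combination hiso

lemma rel20 {g : SLC 3} (hg : g ∈ GammaEis) :
    (↑g : Matrix (Fin 3) (Fin 3) ℂ) 2 2 * starRingEnd ℂ ((↑g : Matrix (Fin 3) (Fin 3) ℂ) 0 0)
    + (↑g : Matrix (Fin 3) (Fin 3) ℂ) 2 1 * starRingEnd ℂ ((↑g : Matrix (Fin 3) (Fin 3) ℂ) 0 1)
    + (↑g : Matrix (Fin 3) (Fin 3) ℂ) 2 0 * starRingEnd ℂ ((↑g : Matrix (Fin 3) (Fin 3) ℂ) 0 2)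
    = 1 := by
  have h := congrArg (fun M : Matrix (Fin 3) (Fin 3) ℂ => M 2 0) (gJgH hg)
  simp only [Matrix.mul_apply, Fin.sum_univ_succ, Fin.sum_univ_zero,
    Matrix.conjTranspose_apply, Jmat2_eq] at h
  simp [Matrix.vecHead, Matrix.vecTail] at h
  linear_combination h

lemma rel21 {g : SLC 3} (hg : g ∈ GammaEis) :
    (↑g : Matrix (Fin 3) (Fin 3) ℂ) 2 2 * starRingEnd ℂ ((↑g : Matrix (Fin 3) (Fin 3) ℂ) 1 0)
    + (↑g : Matrix (Fin 3) (Fin 3) ℂ) 2 1 * starRingEnd ℂ ((↑g : Matrix (Fin 3) (Fin 3) ℂ) 1 1)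
    + (↑g : Matrix (Fin 3) (Fin 3) ℂ) 2 0 * starRingEnd ℂ ((↑g : Matrix (Fin 3) (Fin 3) ℂ) 1 2)
    = 0 := by
  have h := congrArg (fun M : Matrix (Fin 3) (Fin 3) ℂ => M 2 1) (gJgH hg)
  simp only [Matrix.mul_apply, Fin.sum_univ_succ, Fin.sum_univ_zero,
    Matrix.conjTranspose_apply, Jmat2_eq] at h
  simp [Matrix.vecHead, Matrix.vecTail] at h
  linear_combination h

lemma rel12 {g : SLC 3} (hg : g ∈ GammaEis) :
    starRingEnd ℂ ((↑g : Matrix (Fin 3) (Fin 3) ℂ) 2 1) * (↑g : Matrix (Fin 3) (Fin 3) ℂ) 0 2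
    + starRingEnd ℂ ((↑g : Matrix (Fin 3) (Fin 3) ℂ) 1 1) * (↑g : Matrix (Fin 3) (Fin 3) ℂ) 1 2
    + starRingEnd ℂ ((↑g : Matrix (Fin 3) (Fin 3) ℂ) 0 1) * (↑g : Matrix (Fin 3) (Fin 3) ℂ) 2 2
    = 0 := by
  have h := congrArg (fun M : Matrix (Fin 3) (Fin 3) ℂ => M 1 2) hg.2
  simp only [Matrix.mul_apply, Fin.sum_univ_succ, Fin.sum_univ_zero,
    Matrix.conjTranspose_apply, Jmat2_eq] at h
  simp [Matrix.vecHead, Matrix.vecTail] at h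
  linear_combination h

lemma rel22 {g : SLC 3} (hg : g ∈ GammaEis) :
    starRingEnd ℂ ((↑g : Matrix (Fin 3) (Fin 3) ℂ) 2 2) * (↑g : Matrix (Fin 3) (Fin 3) ℂ) 0 2
    + starRingEnd ℂ ((↑g : Matrix (Fin 3) (Fin 3) ℂ) 1 2) * (↑g : Matrix (Fin 3) (Fin 3) ℂ) 1 2
    + starRingEnd ℂ ((↑g : Matrix (Fin 3) (Fin 3) ℂ) 0 2) * (↑g : Matrix (Fin 3) (Fin 3) ℂ) 2 2
    = 0 := by
  have h := congrArg (fun M : Matrix (Fin 3) (Fin 3) ℂ => M 2 2) hg.2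
  simp only [Matrix.mul_apply, Fin.sum_univ_succ, Fin.sum_univ_zero,
    Matrix.conjTranspose_apply, Jmat2_eq] at h
  simp [Matrix.vecHead, Matrix.vecTail] at h
  linear_combination h

lemma coords_trace (m n : ℤ) :
    ((m:ℂ) + n * zeta3) + starRingEnd ℂ ((m:ℂ) + n * zeta3) = ((2*m - n : ℤ) : ℂ) := by
  simp only [map_add, _root_.map_mul, map_intCast, conj_zeta3']
  push_cast; ring

lemma coords_norm (m n : ℤ) :
    ((m:ℂ) + n * zeta3) * starRingEnd ℂ ((m:ℂ) + n * zeta3)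
      = ((m^2 - m*n + n^2 : ℤ) : ℂ) := by
  simp only [map_add, _root_.map_mul, map_intCast, conj_zeta3']
  push_cast
  linear_combination (-(n:ℂ)^2) * zeta3_quad

lemma coords_half (m n : ℤ) :
    (m:ℂ) + n * zeta3 = (((2*m - n : ℤ) : ℂ) + (n:ℂ) * sqrt3)/2 := by
  rw [sqrt3]; push_cast; ring

lemma unit_one_mod3 {e : ℂ} (he3 : e - 1 ∈ mulSet 3) (hn : Complex.normSq e = 1) :
    e = 1 := by
  obtain ⟨lam, hlam, hle⟩ := he3
  obtain ⟨m, n, hmn⟩ := mem_Eis_iff.mp hlam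
  have he' : e = 1 + 3 * lam := by linear_combination hle
  have hcplx : (1 : ℂ) = 1 + 3*((2*m - n : ℤ):ℂ) + 9*((m^2 - m*n + n^2 : ℤ):ℂ) := by
    have h1 : e * starRingEnd ℂ e = 1 := by
      rw [Complex.mul_conj, hn]
      norm_num
    rw [he'] at h1
    simp only [map_add, _root_.map_mul, _root_.map_one, map_ofNat] at h1
    have ht := coords_trace m n
    have hq := coords_norm m n
    rw [← hmn] at ht hq
    linear_combination -h1 + 3 * ht + 9 * hq
  have hint : 3*(2*m - n) + 9*(m^2 - m*n + n^2) = 0 := by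
    have : ((3*(2*m - n) + 9*(m^2 - m*n + n^2) : ℤ) : ℂ) = 0 := by
      push_cast at hcplx ⊢
      linear_combination -hcplx
    exact_mod_cast this
  set q : ℤ := m^2 - m*n + n^2 with hq
  have hA : 2*m - n = -3*q := by omega
  have h4 : (2*m - n)^2 + 3*n^2 = 4*q := by rw [hq]; ring
  have hq0 : 0 ≤ q := by nlinarith [sq_nonneg (2*m - n), sq_nonneg n]
  have hqz : q = 0 := by nlinarith [sq_nonneg n]
  have hn2 : n^2 = 0 := by nlinarith
  have hn0 : n = 0 := by nlinarith [sq_nonneg n]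
  have hm0 : m = 0 := by omega
  rw [he', hmn, hm0, hn0]
  push_cast
  ring

lemma base_case {g : SLC 3} (hg : g ∈ Upsilon)
    (hc : (↑g : Matrix (Fin 3) (Fin 3) ℂ) 2 0 = 0) :
    ∃ z x, z ∈ Eis ∧ parityOK z x ∧ g = nSL z x := by
  set M : Matrix (Fin 3) (Fin 3) ℂ := ↑g with hM
  -- d = 0
  have hiso := row_iso hg.1.1
  rw [← hM, hc] at hiso
  simp only [map_zero, mul_zero, zero_mul, add_zero, zero_add] at hiso
  have hd : M 2 1 = 0 := Complex.eq_zero_of_mul_conj_eq_zero hiso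
  -- e * conj(a) = 1
  have h20 := rel20 hg.1.1
  rw [← hM, hc, hd] at h20
  simp only [map_zero, mul_zero, zero_mul, add_zero, zero_add] at h20
  -- e = 1
  have he1 : M 2 2 = 1 := by
    have hns : Complex.normSq (M 2 2) * Complex.normSq (M 0 0) = 1 := by
      have := congrArg Complex.normSq h20
      rwa [Complex.normSq_mul, Complex.normSq_conj, Complex.normSq_one] at this
    obtain ⟨s, hs⟩ := normSq_one_mod3 (U3 hg)
    obtain ⟨r, hr⟩ := Eis_normSq_nat (entries_Ups hg 0 0)
    rw [hs, hr] at hns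
    have hisz : (3*s + 1) * (r : ℤ) = 1 := by exact_mod_cast hns
    have hr0 : (0:ℤ) ≤ r := Int.natCast_nonneg r
    have hone : Complex.normSq (M 2 2) = 1 := by
      rcases Int.mul_eq_one_iff_eq_one_or_neg_one.mp hisz with ⟨h1, _⟩ | ⟨h1, _⟩
      · have hs0 : s = 0 := by omega
        rw [hs, hs0]; norm_num
      · omega
    exact unit_one_mod3 (U3 hg) hone
  -- a = 1 and M10 = 0
  have h00 : M 0 0 = 1 := by
    rw [he1, one_mul] at h20
    have := congrArg (starRingEnd ℂ) h20
    rwa [Complex.conj_conj, _root_.map_one] at this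
  have h21r := rel21 hg.1.1
  rw [← hM, hc, hd, he1] at h21r
  simp only [map_zero, mul_zero, zero_mul, add_zero, zero_add, one_mul] at h21r
  have h10 : M 1 0 = 0 := by
    have := congrArg (starRingEnd ℂ) h21r
    rwa [Complex.conj_conj, map_zero] at this
  -- M11 = 1 from determinant
  have hdet : M.det = 1 := g.prop
  rw [Matrix.det_fin_three] at hdet
  rw [hc, hd, he1, h00, h10] at hdet
  have h11 : M 1 1 = 1 := by linear_combination hdet
  -- M12 = -conj(M01)
  have h12r := rel12 hg.1.1
  rw [← hM, hd, he1, h11] at h12r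
  simp only [map_zero, zero_mul, add_zero, zero_add, _root_.map_one, one_mul, mul_one] at h12r
  -- M01 = sqrt3 * z
  obtain ⟨z, hzE, h01⟩ := off_diag_Ups hg (show (0 : Fin 3) ≠ 1 by decide)
  simp only [← hM] at h01
  have h12 : M 1 2 = sqrt3 * starRingEnd ℂ z := by
    have : M 1 2 = -starRingEnd ℂ (M 0 1) := by linear_combination h12r
    rw [this, h01, _root_.map_mul, conj_sqrt3]
    ring
  -- trace relation for M02
  obtain ⟨az, Nz, htrz, hnz, hNz0⟩ := Eis_trace_norm hzE
  have h22r := rel22 hg.1.1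
  rw [← hM, he1, h12] at h22r
  simp only [_root_.map_one, one_mul, mul_one] at h22r
  have h22r' : M 0 2 + starRingEnd ℂ (M 0 2) + 3 * ((Nz : ℂ)) = 0 := by
    have hcc : starRingEnd ℂ (sqrt3 * starRingEnd ℂ z) * (sqrt3 * starRingEnd ℂ z)
        = 3 * (Nz : ℂ) := by
      rw [_root_.map_mul, conj_sqrt3, Complex.conj_conj]
      linear_combination (-(z * starRingEnd ℂ z)) * sqrt3_sq + 3 * hnz
    linear_combination h22r - hcc
  obtain ⟨m, n, hm02⟩ := mem_Eis_iff.mp (entries_Ups hg 0 2)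
  simp only [← hM] at hm02
  have htr2 : ((2*m - n : ℤ) : ℂ) = -3 * (Nz : ℂ) := by
    rw [← coords_trace m n, ← hm02]
    linear_combination h22r'
  have hint : 2*m - n = -3*Nz := by exact_mod_cast htr2
  -- parity
  have hpar : parityOK z n := by
    refine ⟨((m + Nz : ℤ) : ℂ), intCast_mem_Eis _, ?_⟩
    rw [hnz]
    have : (n : ℤ) - Nz = 2*(m + Nz) := by omega
    exact_mod_cast this
  have h02 : M 0 2 = (-3*(z*starRingEnd ℂ z) + (n:ℂ)*sqrt3)/2 := by
    rw [hm02, coords_half m n, hnz, htr2]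
  have h02' : M 0 2 = (-(3*(z*starRingEnd ℂ z)) + (n:ℂ)*sqrt3)/2 := by
    rw [h02]; ring
  refine ⟨z, n, hzE, hpar, ?_⟩
  apply Subtype.ext
  ext i j
  fin_cases i <;> fin_cases j <;>
    simp only [← hM] <;>
    simp [nSL, nMat, Matrix.vecHead, Matrix.vecTail] <;>
    first
    | exact h00
    | exact h01
    | exact h02
    | exact h02'
    | exact h10
    | exact h11
    | exact h12
    | exact hc
    | exact hd
    | exact he1

/-- The group `Υ` is generated by the matrices `n(z,x)` and their
transposes `n(z,x)ᵀ`, for `z ∈ ℤ[ζ]` and `x ∈ ℤ` with `x ≡ N(z) mod 2`. -/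
theorem statement10 : Subgroup.closure genSet = Upsilon := by
  apply le_antisymm
  · rw [Subgroup.closure_le]
    rintro g ⟨z, x, hz, hx, (rfl | rfl)⟩
    · exact nSL_mem_Upsilon hz hx
    · exact ntSL_mem_Upsilon hz hx
  · intro g hg
    have main : ∀ n : ℕ, ∀ h : SLC 3, h ∈ Upsilon →
        Complex.normSq ((↑h : Matrix (Fin 3) (Fin 3) ℂ) 2 0) ≤ (n : ℝ) →
        h ∈ Subgroup.closure genSet := by
      intro n
      induction n using Nat.strong_induction_on with
      | _ n ih =>
        intro h hh hbound
        by_cases hc : (↑h : Matrix (Fin 3) (Fin 3) ℂ) 2 0 = 0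
        · obtain ⟨z, x, hz, hx, rfl⟩ := base_case hh hc
          exact Subgroup.subset_closure ⟨z, x, hz, hx, Or.inl rfl⟩
        · obtain ⟨z, x, hz, hx, hlt, -⟩ := moveA hh hc
          set h1 := h * nSL z x with hh1
          have hh1U : h1 ∈ Upsilon := Upsilon.mul_mem hh (nSL_mem_Upsilon hz hx)
          obtain ⟨w, y, hw, hy, hle⟩ := moveB hh1U
          set h2 := h1 * ntSL w y with hh2
          have hh2U : h2 ∈ Upsilon := Upsilon.mul_mem hh1U (ntSL_mem_Upsilon hw hy)
          obtain ⟨m, hm⟩ := Eis_normSq_nat (entries_Ups hh2U 2 0)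
          have hmn : m < n := by
            have h1' : (m:ℝ) < (n:ℝ) := by
              calc (m:ℝ) = _ := hm.symm
                _ ≤ _ := hle
                _ < _ := hlt
                _ ≤ (n:ℝ) := hbound
            exact_mod_cast h1'
          have hcl2 : h2 ∈ Subgroup.closure genSet := ih m hmn h2 hh2U (le_of_eq hm)
          have c1 : nSL z x ∈ Subgroup.closure genSet :=
            Subgroup.subset_closure ⟨z, x, hz, hx, Or.inl rfl⟩
          have c2 : ntSL w y ∈ Subgroup.closure genSet :=
            Subgroup.subset_closure ⟨w, y, hw, hy, Or.inr rfl⟩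
          have hfac : h = h2 * (ntSL w y)⁻¹ * (nSL z x)⁻¹ := by
            rw [hh2, hh1]
            group
          rw [hfac]
          exact mul_mem (mul_mem hcl2 (inv_mem c2)) (inv_mem c1)
    obtain ⟨n0, hn0⟩ := Eis_normSq_nat (entries_Ups hg 2 0)
    exact main n0 g hg (le_of_eq hn0)

end
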